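/- Let (s_1, s_2) and (s'_1, s'_2) be Cuntz families of order 2 on complex Hilbert spaces H and H' with cyclic unit vectors Ω and Ω' respectively. Then: (1) if (s_1 + s_2)Ω = √2·Ω, then every bounded operator on H commuting with s_1, s_2, s_1^*, s_2^* is a scalar multiple of the identity; (2) if (s_1 + s_2)Ω = √2·Ω and (s'_1 + s'_2)Ω' = √2·Ω' (or if (s_1 − s_2)Ω = √2·Ω and (s'_1 − s'_2)Ω' = √2·Ω'), then there exists a unitary U : H → H' with U s_i = s'_i U for i = 1, 2; (3) if (s_1 + s_2)Ω = √2·Ω and (s'_1 − s'_2)Ω' = √2·Ω', then there exists no unitary U : H → H' with U s_i = s'_i U for i = 1, 2. In other words, GP(+) and GP(−) each contain exactly one unitary equivalence class, each is irreducible, and GP(+) and GP(−) are not equivalent. -/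

import Mathlib

noncomputable section

def IsCuntzFamily {H : Type*} [NormedAddCommGroup H] [InnerProductSpace ℂ H]
    [CompleteSpace H] {N : ℕ} (s : Fin N → H →L[ℂ] H) : Prop :=
  (∀ i j, star (s i) * s j = if i = j then (1 : H →L[ℂ] H) else 0) ∧
  ∑ i, s i * star (s i) = 1

def IsCyclicVec {H : Type*} [NormedAddCommGroup H] [InnerProductSpace ℂ H]
    [CompleteSpace H] {N : ℕ} (s : Fin N → H →L[ℂ] H) (Ω : H) : Prop :=
  ∀ W : Submodule ℂ H, IsClosed (W : Set H) → Ω ∈ W →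
    (∀ i, ∀ x ∈ W, s i x ∈ W ∧ star (s i) x ∈ W) → W = ⊤

namespace GPaux

local notation "⟪" x ", " y "⟫" => @inner ℂ _ _ x y

/-- reduced words: words in {0,1} not ending in 0 -/
lemma fin2 (i : Fin 2) : i = 0 ∨ i = 1 := by omega

abbrev RW : Type := {w : List (Fin 2) // w.getLast? ≠ some 0}

/-- strip leading zeros -/
def stripZeros : List (Fin 2) → List (Fin 2)
  | [] => []
  | i :: w => if i = 0 then stripZeros w else i :: w

lemma stripZeros_head? (l : List (Fin 2)) : (stripZeros l).head? ≠ some 0 := by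
  induction l with
  | nil => simp [stripZeros]
  | cons a l ih =>
      by_cases ha : a = 0
      · simpa [stripZeros, ha] using ih
      · simpa [stripZeros, ha] using ha

lemma stripZeros_spec (l : List (Fin 2)) :
    ∃ k, l = List.replicate k 0 ++ stripZeros l := by
  induction l with
  | nil => exact ⟨0, rfl⟩
  | cons a l ih =>
      by_cases ha : a = 0
      · obtain ⟨k, hk⟩ := ih
        exact ⟨k + 1, by simp [stripZeros, ha, List.replicate_succ]; exact hk⟩
      · exact ⟨0, by simp [stripZeros, ha]⟩

/-- strip trailing zeros -/
def red (w : List (Fin 2)) : List (Fin 2) := (stripZeros w.reverse).reverse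

lemma red_getLast? (w : List (Fin 2)) : (red w).getLast? ≠ some 0 := by
  rw [red, List.getLast?_reverse]
  exact stripZeros_head? _

lemma red_spec (w : List (Fin 2)) : ∃ k, w = red w ++ List.replicate k 0 := by
  obtain ⟨k, hk⟩ := stripZeros_spec w.reverse
  refine ⟨k, ?_⟩
  have := congrArg List.reverse hk
  simpa [red, List.reverse_replicate] using this

lemma replicate_not_reduced {n : ℕ} {v : List (Fin 2)}
    (h1 : v = List.replicate n 0) (h2 : v.getLast? ≠ some 0) : v = [] := by
  cases n with
  | zero => simpa using h1
  | succ n =>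
      exfalso
      apply h2
      rw [h1, List.replicate_succ', List.getLast?_concat]

section Space

variable {H : Type*} [NormedAddCommGroup H] [InnerProductSpace ℂ H] [CompleteSpace H]

lemma star_inner (A : H →L[ℂ] H) (x y : H) : ⟪star A x, y⟫ = ⟪x, A y⟫ := by
  rw [ContinuousLinearMap.star_eq_adjoint, ContinuousLinearMap.adjoint_inner_left]

lemma inner_star (A : H →L[ℂ] H) (x y : H) : ⟪x, star A y⟫ = ⟪A x, y⟫ := by
  rw [ContinuousLinearMap.star_eq_adjoint, ContinuousLinearMap.adjoint_inner_right]

variable {t : Fin 2 → H →L[ℂ] H} {Ω : H}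

lemma cuntz_apply (ht : IsCuntzFamily t) (i j : Fin 2) (x : H) :
    star (t i) (t j x) = if i = j then x else 0 := by
  have h := congrArg (fun A : H →L[ℂ] H => A x) (ht.1 i j)
  simpa [ContinuousLinearMap.mul_apply, apply_ite (fun A : H →L[ℂ] H => A x)] using h

/-- the vector t_{w_1} ... t_{w_k} Ω -/
def cword (t : Fin 2 → H →L[ℂ] H) (Ω : H) : List (Fin 2) → H
  | [] => Ω
  | i :: w => t i (cword t Ω w)

@[simp] lemma cword_nil : cword t Ω [] = Ω := rfl
@[simp] lemma cword_cons (i : Fin 2) (w : List (Fin 2)) :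
    cword t Ω (i :: w) = t i (cword t Ω w) := rfl

lemma star_t0_fix (ht : IsCuntzFamily t) (hfix : t 0 Ω = Ω) : star (t 0) Ω = Ω := by
  conv_lhs => rw [← hfix]
  simp [cuntz_apply ht]

lemma star_t1_fix (ht : IsCuntzFamily t) (hfix : t 0 Ω = Ω) : star (t 1) Ω = 0 := by
  conv_lhs => rw [← hfix]
  simp [cuntz_apply ht]

lemma cword_concat_zero (hfix : t 0 Ω = Ω) (w : List (Fin 2)) :
    cword t Ω (w ++ [0]) = cword t Ω w := by
  induction w with
  | nil => simpa using hfix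
  | cons i w ih => simp [ih]

lemma cword_append_replicate (hfix : t 0 Ω = Ω) (k : ℕ) (w : List (Fin 2)) :
    cword t Ω (w ++ List.replicate k 0) = cword t Ω w := by
  induction k with
  | zero => simp
  | succ k ih =>
      rw [List.replicate_succ', ← List.append_assoc, cword_concat_zero hfix,
        ih]

lemma cword_red (hfix : t 0 Ω = Ω) (w : List (Fin 2)) :
    cword t Ω (red w) = cword t Ω w := by
  obtain ⟨k, hk⟩ := red_spec w
  conv_rhs => rw [hk]
  rw [cword_append_replicate hfix]

lemma inner_eigen (ht : IsCuntzFamily t) (k : Fin 2) {x : H}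
    (hk : ∀ i, star (t i) x = if i = k then x else 0) :
    ∀ v : List (Fin 2), ⟪x, cword t Ω v⟫ =
      if v = List.replicate v.length k then ⟪x, Ω⟫ else 0 := by
  intro v
  induction v with
  | nil => simp
  | cons j v ih =>
      rw [cword_cons, ← star_inner, hk j]
      by_cases hj : j = k
      · rw [if_pos hj, ih]
        simp [List.replicate_succ, hj]
      · rw [if_neg hj]
        simp [List.replicate_succ, hj, Ne.symm hj]

lemma omega_eigen (ht : IsCuntzFamily t) (hfix : t 0 Ω = Ω) :
    ∀ i, star (t i) Ω = if i = (0 : Fin 2) then Ω else 0 := by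
  intro i
  fin_cases i
  · simpa using star_t0_fix ht hfix
  · simpa using star_t1_fix ht hfix

lemma inner_omega_cword (ht : IsCuntzFamily t) (hfix : t 0 Ω = Ω) (hΩ : ‖Ω‖ = 1)
    {v : List (Fin 2)} (hv : v.getLast? ≠ some 0) :
    ⟪Ω, cword t Ω v⟫ = if v = [] then (1 : ℂ) else 0 := by
  rw [inner_eigen ht 0 (omega_eigen ht hfix) v]
  have hΩΩ : ⟪Ω, Ω⟫ = (1 : ℂ) := by
    rw [inner_self_eq_norm_sq_to_K, hΩ]; norm_num
  by_cases h : v = List.replicate v.length 0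
  · rw [if_pos h, replicate_not_reduced h hv, if_pos rfl, hΩΩ]
  · rw [if_neg h, if_neg]
    rintro rfl
    exact h rfl

lemma cword_orthonormal (ht : IsCuntzFamily t) (hfix : t 0 Ω = Ω) (hΩ : ‖Ω‖ = 1) :
    ∀ w v : List (Fin 2), w.getLast? ≠ some 0 → v.getLast? ≠ some 0 →
      ⟪cword t Ω w, cword t Ω v⟫ = if w = v then (1 : ℂ) else 0 := by
  intro w
  induction w with
  | nil =>
      intro v hw hv
      rw [cword_nil, inner_omega_cword ht hfix hΩ hv]
      simp [eq_comm]
  | cons i w ih =>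
      intro v hw hv
      cases v with
      | nil =>
          rw [← inner_conj_symm, cword_nil, inner_omega_cword ht hfix hΩ hw]
          simp
      | cons j v =>
          rw [cword_cons, cword_cons, ← star_inner, cuntz_apply ht]
          by_cases hij : j = i
          · rw [if_pos hij]
            subst hij
            cases w with
            | nil =>
                cases v with
                | nil => simp [inner_self_eq_norm_sq_to_K, hΩ]
                | cons j' v' =>
                    have hv' : (j' :: v').getLast? ≠ some 0 := by
                      rwa [List.getLast?_cons_cons] at hv
                    rw [cword_nil, inner_omega_cword ht hfix hΩ hv']
                    simp
            | cons i' w' =>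
                have hw' : (i' :: w').getLast? ≠ some 0 := by
                  rwa [List.getLast?_cons_cons] at hw
                cases v with
                | nil =>
                    rw [← inner_conj_symm, cword_nil,
                      inner_omega_cword ht hfix hΩ hw']
                    simp
                | cons j' v' =>
                    have hv' : (j' :: v').getLast? ≠ some 0 := by
                      rwa [List.getLast?_cons_cons] at hv
                    rw [ih _ hw' hv']
                    simp
          · rw [if_neg hij, inner_zero_left, if_neg]
            simp [List.cons.injEq, Ne.symm hij]

lemma span_cword_dense (ht : IsCuntzFamily t) (hfix : t 0 Ω = Ω)
    (hcyc : IsCyclicVec t Ω) :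
    (Submodule.span ℂ (Set.range (cword t Ω))).topologicalClosure = ⊤ := by
  set K := Submodule.span ℂ (Set.range (cword t Ω)) with hK
  have hmem : ∀ w : List (Fin 2), cword t Ω w ∈ K := fun w =>
    Submodule.subset_span ⟨w, rfl⟩
  apply hcyc
  · exact Submodule.isClosed_topologicalClosure K
  · exact Submodule.le_topologicalClosure K (hmem [])
  · intro i
    have inv : ∀ f : H →L[ℂ] H, (∀ w, f (cword t Ω w) ∈ K) →
        ∀ x ∈ K.topologicalClosure, f x ∈ K.topologicalClosure := by
      intro f hf x hx
      have h1 : K ≤ K.topologicalClosure.comap (f : H →ₗ[ℂ] H) := by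
        rw [Submodule.span_le]
        rintro _ ⟨w, rfl⟩
        exact Submodule.le_topologicalClosure K (hf w)
      have h2 : IsClosed (K.topologicalClosure.comap (f : H →ₗ[ℂ] H) : Set H) :=
        IsClosed.preimage f.continuous (Submodule.isClosed_topologicalClosure K)
      exact K.topologicalClosure_minimal h1 h2 hx
    intro x hx
    constructor
    · exact inv (t i) (fun w => hmem (i :: w)) x hx
    · refine inv (star (t i)) (fun w => ?_) x hx
      cases w with
      | nil =>
          rcases fin2 i with rfl | rfl
          · rw [cword_nil, star_t0_fix ht hfix]; exact hmem []
          · rw [cword_nil, star_t1_fix ht hfix]; exact K.zero_mem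
      | cons j w =>
          rw [cword_cons, cuntz_apply ht]
          by_cases h : i = j
          · rw [if_pos h]; exact hmem w
          · rw [if_neg h]; exact K.zero_mem

lemma eq_zero_of_perp (ht : IsCuntzFamily t) (hfix : t 0 Ω = Ω)
    (hcyc : IsCyclicVec t Ω) {z : H}
    (h : ∀ w : List (Fin 2), ⟪z, cword t Ω w⟫ = 0) : z = 0 := by
  have hdense := span_cword_dense ht hfix hcyc
  have hz : z ∈ (innerSL ℂ z).ker := by
    have : (⊤ : Submodule ℂ H) ≤ (innerSL ℂ z).ker := by
      rw [← hdense]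
      apply Submodule.topologicalClosure_minimal _
      · rw [Submodule.span_le]
        rintro _ ⟨w, rfl⟩
        exact h w
      · exact ContinuousLinearMap.isClosed_ker (innerSL ℂ z)
    exact this Submodule.mem_top
  have : ⟪z, z⟫ = 0 := hz
  exact inner_self_eq_zero.mp this

lemma scalar_vec (ht : IsCuntzFamily t) (hfix : t 0 Ω = Ω)
    (hcyc : IsCyclicVec t Ω) (hΩ : ‖Ω‖ = 1) {x : H}
    (h0 : star (t 0) x = x) (h1 : star (t 1) x = 0) :
    x = ⟪Ω, x⟫ • Ω := by
  have hk : ∀ i, star (t i) x = if i = (0 : Fin 2) then x else 0 := by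
    intro i; fin_cases i <;> simpa
  have key : ∀ w : List (Fin 2), ⟪x - ⟪Ω, x⟫ • Ω, cword t Ω w⟫ = 0 := by
    intro w
    rw [← cword_red hfix w, inner_sub_left, inner_smul_left,
      inner_eigen ht 0 hk, inner_eigen ht 0 (omega_eigen ht hfix)]
    by_cases h : red w = List.replicate (red w).length 0
    · rw [if_pos h, if_pos h]
      have : red w = [] := replicate_not_reduced h (red_getLast? w)
      rw [this] at *
      have hx : ⟪x, Ω⟫ = (starRingEnd ℂ) ⟪Ω, x⟫ := (inner_conj_symm _ _).symm
      have hΩΩ : ⟪Ω, Ω⟫ = (1 : ℂ) := by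
        rw [inner_self_eq_norm_sq_to_K, hΩ]; norm_num
      rw [hx]
      simp [hΩΩ, hΩ]
    · rw [if_neg h, if_neg h]
      ring
  have := eq_zero_of_perp ht hfix hcyc key
  rw [sub_eq_zero] at this
  exact this

lemma vanish_vec (ht : IsCuntzFamily t) (hfix : t 0 Ω = Ω)
    (hcyc : IsCyclicVec t Ω) {x : H}
    (h0 : star (t 0) x = 0) (h1 : star (t 1) x = x) : x = 0 := by
  have hk : ∀ i, star (t i) x = if i = (1 : Fin 2) then x else 0 := by
    intro i; fin_cases i <;> simpa
  have hxΩ : ⟪x, Ω⟫ = 0 := by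
    rw [← hfix, ← star_inner, h0, inner_zero_left]
  refine eq_zero_of_perp ht hfix hcyc fun w => ?_
  rw [inner_eigen ht 1 hk w, hxΩ]
  simp

def gen (t : Fin 2 → H →L[ℂ] H) (Ω : H) (i : RW) : H := cword t Ω i.1

lemma gen_orthonormal (ht : IsCuntzFamily t) (hfix : t 0 Ω = Ω) (hΩ : ‖Ω‖ = 1) :
    Orthonormal ℂ (gen t Ω) := by
  rw [orthonormal_iff_ite]
  intro i j
  rw [gen, gen, cword_orthonormal ht hfix hΩ _ _ i.2 j.2]
  by_cases h : i = j
  · rw [if_pos h, if_pos (congrArg Subtype.val h)]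
  · rw [if_neg h, if_neg fun hh => h (Subtype.ext hh)]

lemma gen_dense (ht : IsCuntzFamily t) (hfix : t 0 Ω = Ω) (hcyc : IsCyclicVec t Ω) :
    ⊤ ≤ (Submodule.span ℂ (Set.range (gen t Ω))).topologicalClosure := by
  rw [← span_cword_dense ht hfix hcyc]
  apply Submodule.topologicalClosure_mono
  rw [Submodule.span_le]
  rintro _ ⟨w, rfl⟩
  rw [← cword_red hfix w]
  exact Submodule.subset_span ⟨⟨red w, red_getLast? w⟩, rfl⟩

def cuntzBasis (ht : IsCuntzFamily t) (hfix : t 0 Ω = Ω) (hcyc : IsCyclicVec t Ω)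
    (hΩ : ‖Ω‖ = 1) : HilbertBasis RW ℂ H :=
  HilbertBasis.mk (gen_orthonormal ht hfix hΩ) (gen_dense ht hfix hcyc)

end Space

section Conj

variable {H : Type*} [NormedAddCommGroup H] [InnerProductSpace ℂ H] [CompleteSpace H]
variable {H' : Type*} [NormedAddCommGroup H'] [InnerProductSpace ℂ H'] [CompleteSpace H']
variable {t : Fin 2 → H →L[ℂ] H} {Ω : H} {t' : Fin 2 → H' →L[ℂ] H'} {Ω' : H'}

lemma conj_exists (ht : IsCuntzFamily t) (ht' : IsCuntzFamily t')
    (hfix : t 0 Ω = Ω) (hfix' : t' 0 Ω' = Ω')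
    (hcyc : IsCyclicVec t Ω) (hcyc' : IsCyclicVec t' Ω')
    (hΩ : ‖Ω‖ = 1) (hΩ' : ‖Ω'‖ = 1) :
    ∃ U : H ≃ₗᵢ[ℂ] H', ∀ i : Fin 2, ∀ x : H, U (t i x) = t' i (U x) := by
  classical
  set b : HilbertBasis RW ℂ H := cuntzBasis ht hfix hcyc hΩ with hb
  set b' : HilbertBasis RW ℂ H' := cuntzBasis ht' hfix' hcyc' hΩ' with hb'
  set U : H ≃ₗᵢ[ℂ] H' := b.repr.trans b'.repr.symm with hU
  have hbi : ∀ i : RW, b i = gen t Ω i := fun i =>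
    congrFun (HilbertBasis.coe_mk _ _) i
  have hbi' : ∀ i : RW, b' i = gen t' Ω' i := fun i =>
    congrFun (HilbertBasis.coe_mk _ _) i
  have hUb : ∀ i : RW, U (gen t Ω i) = gen t' Ω' i := by
    intro i
    rw [← hbi i, ← hbi' i, hU, LinearIsometryEquiv.trans_apply, b.repr_self,
      b'.repr_symm_single]
  have hUw : ∀ w : List (Fin 2), U (cword t Ω w) = cword t' Ω' w := by
    intro w
    rw [← cword_red hfix w, ← cword_red hfix' w]
    exact hUb ⟨red w, red_getLast? w⟩
  refine ⟨U, fun i x => ?_⟩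
  set Ucl : H →L[ℂ] H' := U.toLinearIsometry.toContinuousLinearMap with hUcl
  have hUclx : ∀ y : H, Ucl y = U y := fun y => rfl
  set A : H →L[ℂ] H' := (t' i).comp Ucl with hA
  set B : H →L[ℂ] H' := Ucl.comp (t i) with hB
  have hker : (⊤ : Submodule ℂ H) ≤ (A - B).ker := by
    rw [← span_cword_dense ht hfix hcyc]
    apply Submodule.topologicalClosure_minimal _ _
      (ContinuousLinearMap.isClosed_ker (A - B))
    rw [Submodule.span_le]
    rintro _ ⟨w, rfl⟩
    have : A (cword t Ω w) = B (cword t Ω w) := by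
      rw [hA, hB]
      simp only [ContinuousLinearMap.comp_apply, hUclx]
      rw [hUw w, ← cword_cons, ← cword_cons, hUw (i :: w)]
    simpa [LinearMap.mem_ker, sub_eq_zero] using this
  have hx : (A - B) x = 0 := hker Submodule.mem_top
  rw [ContinuousLinearMap.sub_apply, sub_eq_zero, hA, hB] at hx
  simpa [ContinuousLinearMap.comp_apply, hUclx] using hx.symm

end Conj

section Had

def cc : ℂ := ((Real.sqrt 2 : ℝ) : ℂ)⁻¹

lemma sqrt2_sq : ((Real.sqrt 2 : ℝ) : ℂ) * ((Real.sqrt 2 : ℝ) : ℂ) = 2 := by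
  rw [← Complex.ofReal_mul, Real.mul_self_sqrt (by norm_num)]
  norm_num

lemma sqrt2_ne : ((Real.sqrt 2 : ℝ) : ℂ) ≠ 0 :=
  Complex.ofReal_ne_zero.mpr (Real.sqrt_pos.mpr (by norm_num : (0:ℝ) < 2)).ne' 

lemma cc_mul_cc : cc * cc = 2⁻¹ := by
  rw [cc, ← mul_inv, sqrt2_sq]

lemma cc_mul_sqrt2 : cc * ((Real.sqrt 2 : ℝ) : ℂ) = 1 := inv_mul_cancel₀ sqrt2_ne

lemma star_cc : star cc = cc := by
  rw [cc]
  simp [Complex.star_def, map_inv₀, Complex.conj_ofReal]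

variable {H : Type*} [NormedAddCommGroup H] [InnerProductSpace ℂ H] [CompleteSpace H]

def tp (s : Fin 2 → H →L[ℂ] H) : Fin 2 → H →L[ℂ] H :=
  ![cc • (s 0 + s 1), cc • (s 0 - s 1)]

def tm (s : Fin 2 → H →L[ℂ] H) : Fin 2 → H →L[ℂ] H := ![tp s 1, tp s 0]

variable {s : Fin 2 → H →L[ℂ] H}

lemma tp0 : tp s 0 = cc • (s 0 + s 1) := rfl
lemma tp1 : tp s 1 = cc • (s 0 - s 1) := rfl
lemma tm0 : tm s 0 = cc • (s 0 - s 1) := rfl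
lemma tm1 : tm s 1 = cc • (s 0 + s 1) := rfl

lemma star_tp0 : star (tp s 0) = cc • (star (s 0) + star (s 1)) := by
  rw [tp0, star_smul, star_cc, star_add]

lemma star_tp1 : star (tp s 1) = cc • (star (s 0) - star (s 1)) := by
  rw [tp1, star_smul, star_cc, star_sub]

lemma tp_cuntz (hs : IsCuntzFamily s) : IsCuntzFamily (tp s) := by
  have h00 : star (s 0) * s 0 = 1 := by simpa using hs.1 0 0
  have h01 : star (s 0) * s 1 = 0 := by simpa using hs.1 0 1
  have h10 : star (s 1) * s 0 = 0 := by simpa using hs.1 1 0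
  have h11 : star (s 1) * s 1 = 1 := by simpa using hs.1 1 1
  have hsum : s 0 * star (s 0) + s 1 * star (s 1) = 1 := by
    have := hs.2
    rwa [Fin.sum_univ_two] at this
  constructor
  · intro i j
    rcases fin2 i with rfl | rfl <;> rcases fin2 j with rfl | rfl
    · rw [if_pos rfl, star_tp0, tp0, smul_mul_smul_comm, cc_mul_cc]
      simp only [add_mul, mul_add]
      rw [h00, h01, h10, h11]
      module
    · rw [if_neg (by decide), star_tp0, tp1, smul_mul_smul_comm, cc_mul_cc]
      simp only [add_mul, mul_sub]
      rw [h00, h01, h10, h11]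
      module
    · rw [if_neg (by decide), star_tp1, tp0, smul_mul_smul_comm, cc_mul_cc]
      simp only [sub_mul, mul_add]
      rw [h00, h01, h10, h11]
      module
    · rw [if_pos rfl, star_tp1, tp1, smul_mul_smul_comm, cc_mul_cc]
      simp only [sub_mul, mul_sub]
      rw [h00, h01, h10, h11]
      module
  · rw [Fin.sum_univ_two, star_tp0, star_tp1, tp0, tp1, smul_mul_smul_comm,
      smul_mul_smul_comm, cc_mul_cc]
    simp only [add_mul, sub_mul, mul_add, mul_sub]
    rw [← hsum]
    module

lemma swap_cuntz {t : Fin 2 → H →L[ℂ] H} (ht : IsCuntzFamily t) :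
    IsCuntzFamily ![t 1, t 0] := by
  constructor
  · intro i j
    fin_cases i <;> fin_cases j <;>
      simp [ht.1]
  · rw [Fin.sum_univ_two]
    have := ht.2
    rw [Fin.sum_univ_two] at this
    simpa [add_comm] using this

lemma tm_cuntz (hs : IsCuntzFamily s) : IsCuntzFamily (tm s) :=
  swap_cuntz (tp_cuntz hs)

lemma key_add (a b : H) : cc • ((cc • (a + b)) + (cc • (a - b))) = a := by
  rw [smul_add, smul_smul, smul_smul, cc_mul_cc]
  module

lemma key_sub (a b : H) : cc • ((cc • (a + b)) - (cc • (a - b))) = b := by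
  rw [smul_sub, smul_smul, smul_smul, cc_mul_cc]
  module

lemma tp0_apply (x : H) : tp s 0 x = cc • (s 0 x + s 1 x) := by
  rw [tp0]; simp

lemma tp1_apply (x : H) : tp s 1 x = cc • (s 0 x - s 1 x) := by
  rw [tp1]; simp

lemma star_tp0_apply (x : H) : star (tp s 0) x = cc • (star (s 0) x + star (s 1) x) := by
  rw [star_tp0]; simp

lemma star_tp1_apply (x : H) : star (tp s 1) x = cc • (star (s 0) x - star (s 1) x) := by
  rw [star_tp1]; simp

lemma s0_decomp (x : H) : s 0 x = cc • (tp s 0 x + tp s 1 x) := by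
  rw [tp0_apply, tp1_apply, key_add]

lemma s1_decomp (x : H) : s 1 x = cc • (tp s 0 x - tp s 1 x) := by
  rw [tp0_apply, tp1_apply, key_sub]

lemma star_s0_decomp (x : H) :
    star (s 0) x = cc • (star (tp s 0) x + star (tp s 1) x) := by
  rw [star_tp0_apply, star_tp1_apply, key_add]

lemma star_s1_decomp (x : H) :
    star (s 1) x = cc • (star (tp s 0) x - star (tp s 1) x) := by
  rw [star_tp0_apply, star_tp1_apply, key_sub]

lemma tp_cyclic {Ω : H} (hcyc : IsCyclicVec s Ω) : IsCyclicVec (tp s) Ω := by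
  intro W hW hΩW hinv
  apply hcyc W hW hΩW
  intro i x hx
  obtain ⟨h0, h0s⟩ := hinv 0 x hx
  obtain ⟨h1, h1s⟩ := hinv 1 x hx
  rcases fin2 i with rfl | rfl
  · exact ⟨by rw [s0_decomp]; exact W.smul_mem _ (W.add_mem h0 h1),
      by rw [star_s0_decomp]; exact W.smul_mem _ (W.add_mem h0s h1s)⟩
  · exact ⟨by rw [s1_decomp]; exact W.smul_mem _ (W.sub_mem h0 h1),
      by rw [star_s1_decomp]; exact W.smul_mem _ (W.sub_mem h0s h1s)⟩

lemma tm_cyclic {Ω : H} (hcyc : IsCyclicVec s Ω) : IsCyclicVec (tm s) Ω := by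
  intro W hW hΩW hinv
  apply tp_cyclic hcyc W hW hΩW
  intro i x hx
  rcases fin2 i with rfl | rfl
  · have := hinv 1 x hx
    simpa [tm] using this
  · have := hinv 0 x hx
    simpa [tm] using this

lemma tp_fix {Ω : H} (hplus : (s 0 + s 1) Ω = (Real.sqrt 2 : ℂ) • Ω) :
    tp s 0 Ω = Ω := by
  rw [tp0]
  simp only [ContinuousLinearMap.smul_apply]
  rw [hplus, smul_smul, cc_mul_sqrt2, one_smul]

lemma tm_fix {Ω : H} (hminus : (s 0 - s 1) Ω = (Real.sqrt 2 : ℂ) • Ω) :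
    tm s 0 Ω = Ω := by
  rw [tm0]
  simp only [ContinuousLinearMap.smul_apply]
  rw [hminus, smul_smul, cc_mul_sqrt2, one_smul]

lemma tm0_apply (x : H) : tm s 0 x = cc • (s 0 x - s 1 x) := by
  rw [tm0]; simp

lemma tm1_apply (x : H) : tm s 1 x = cc • (s 0 x + s 1 x) := by
  rw [tm1]; simp

lemma s0_decomp_m (x : H) : s 0 x = cc • (tm s 0 x + tm s 1 x) := by
  rw [tm0_apply, tm1_apply, add_comm, key_add]

lemma s1_decomp_m (x : H) : s 1 x = cc • (tm s 1 x - tm s 0 x) := by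
  rw [tm0_apply, tm1_apply, key_sub]

end Had

end GPaux

open GPaux in
theorem GP_plus_minus_classification
    {H H' : Type*} [NormedAddCommGroup H] [InnerProductSpace ℂ H] [CompleteSpace H]
    [NormedAddCommGroup H'] [InnerProductSpace ℂ H'] [CompleteSpace H']
    (s : Fin 2 → H →L[ℂ] H) (s' : Fin 2 → H' →L[ℂ] H')
    (hs : IsCuntzFamily s) (hs' : IsCuntzFamily s')
    (Ω : H) (Ω' : H') (hΩ : ‖Ω‖ = 1) (hΩ' : ‖Ω'‖ = 1)
    (hcyc : IsCyclicVec s Ω) (hcyc' : IsCyclicVec s' Ω') :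
    -- (1) irreducibility of GP(+)
    ((s 0 + s 1) Ω = (Real.sqrt 2 : ℂ) • Ω →
      ∀ T : H →L[ℂ] H, (∀ i, T * s i = s i * T ∧ T * star (s i) = star (s i) * T) →
        ∃ c : ℂ, T = c • (1 : H →L[ℂ] H))
    -- (2) uniqueness of GP(+)
    ∧ ((s 0 + s 1) Ω = (Real.sqrt 2 : ℂ) • Ω → (s' 0 + s' 1) Ω' = (Real.sqrt 2 : ℂ) • Ω' →
        ∃ U : H ≃ₗᵢ[ℂ] H', ∀ i, ∀ x : H, U (s i x) = s' i (U x))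
    -- (2') uniqueness of GP(−)
    ∧ ((s 0 - s 1) Ω = (Real.sqrt 2 : ℂ) • Ω → (s' 0 - s' 1) Ω' = (Real.sqrt 2 : ℂ) • Ω' →
        ∃ U : H ≃ₗᵢ[ℂ] H', ∀ i, ∀ x : H, U (s i x) = s' i (U x))
    -- (3) GP(+) and GP(−) are inequivalent
    ∧ ((s 0 + s 1) Ω = (Real.sqrt 2 : ℂ) • Ω → (s' 0 - s' 1) Ω' = (Real.sqrt 2 : ℂ) • Ω' →
        ¬ ∃ U : H ≃ₗᵢ[ℂ] H', ∀ i, ∀ x : H, U (s i x) = s' i (U x)) := by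
  refine ⟨?_, ?_, ?_, ?_⟩
  · -- (1) irreducibility
    intro hplus T hT
    have hplus0 : (s 0 + s 1) Ω = (Real.sqrt 2 : ℂ) • Ω := hplus
    have ht := tp_cuntz hs
    have hfix := tp_fix hplus0
    have htcyc := tp_cyclic (Ω := Ω) hcyc
    have hTs : ∀ i x, T (s i x) = s i (T x) := fun i x => by
      have := congrArg (fun A : H →L[ℂ] H => A x) (hT i).1
      simpa [ContinuousLinearMap.mul_apply] using this
    have hTstar : ∀ i x, T (star (s i) x) = star (s i) (T x) := fun i x => by
      have := congrArg (fun A : H →L[ℂ] H => A x) (hT i).2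
      simpa [ContinuousLinearMap.mul_apply] using this
    have hfix0 : tp s 0 (T Ω) = T Ω := by
      calc tp s 0 (T Ω) = cc • (s 0 (T Ω) + s 1 (T Ω)) := tp0_apply _
        _ = cc • (T (s 0 Ω) + T (s 1 Ω)) := by rw [hTs 0 Ω, hTs 1 Ω]
        _ = T (cc • (s 0 Ω + s 1 Ω)) := by rw [map_smul, map_add]
        _ = T (tp s 0 Ω) := by rw [← tp0_apply]
        _ = T Ω := by rw [hfix]
    have h0 : star (tp s 0) (T Ω) = T Ω := by
      conv_lhs => rw [← hfix0]
      simpa using cuntz_apply ht 0 0 (T Ω)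
    have h1 : star (tp s 1) (T Ω) = 0 := by
      conv_lhs => rw [← hfix0]
      simpa using cuntz_apply ht 1 0 (T Ω)
    have hsc := scalar_vec ht hfix htcyc hΩ h0 h1
    set c : ℂ := @inner ℂ H _ Ω (T Ω) with hc
    refine ⟨c, ?_⟩
    have hker : (T - c • (1 : H →L[ℂ] H)).ker = ⊤ := by
      apply hcyc
      · exact ContinuousLinearMap.isClosed_ker _
      · rw [LinearMap.mem_ker, ContinuousLinearMap.coe_coe, ContinuousLinearMap.sub_apply,
          ContinuousLinearMap.smul_apply, ContinuousLinearMap.one_apply, sub_eq_zero]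
        exact hsc
      · intro i x hx
        rw [LinearMap.mem_ker, ContinuousLinearMap.coe_coe, ContinuousLinearMap.sub_apply,
          ContinuousLinearMap.smul_apply, ContinuousLinearMap.one_apply, sub_eq_zero] at hx
        constructor
        · rw [LinearMap.mem_ker, ContinuousLinearMap.coe_coe, ContinuousLinearMap.sub_apply,
            ContinuousLinearMap.smul_apply, ContinuousLinearMap.one_apply, sub_eq_zero,
            hTs i x, hx, map_smul]
        · rw [LinearMap.mem_ker, ContinuousLinearMap.coe_coe, ContinuousLinearMap.sub_apply,
            ContinuousLinearMap.smul_apply, ContinuousLinearMap.one_apply, sub_eq_zero,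
            hTstar i x, hx, map_smul]
    ext x
    have hx : x ∈ (T - c • (1 : H →L[ℂ] H)).ker := hker ▸ Submodule.mem_top
    rw [LinearMap.mem_ker, ContinuousLinearMap.coe_coe, ContinuousLinearMap.sub_apply, ContinuousLinearMap.smul_apply,
      ContinuousLinearMap.one_apply, sub_eq_zero] at hx
    simpa using hx
  · -- (2) uniqueness of GP(+)
    intro hplus hplus'
    obtain ⟨U, hU⟩ := conj_exists (tp_cuntz hs) (tp_cuntz hs') (tp_fix hplus)
      (tp_fix hplus') (tp_cyclic hcyc) (tp_cyclic hcyc') hΩ hΩ'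
    refine ⟨U, fun i x => ?_⟩
    rcases fin2 i with rfl | rfl
    · rw [s0_decomp (s := s) x, map_smul, map_add, hU 0, hU 1,
        ← s0_decomp (s := s') (U x)]
    · rw [s1_decomp (s := s) x, map_smul, map_sub, hU 0, hU 1,
        ← s1_decomp (s := s') (U x)]
  · -- (2') uniqueness of GP(−)
    intro hminus hminus'
    obtain ⟨U, hU⟩ := conj_exists (tm_cuntz hs) (tm_cuntz hs') (tm_fix hminus)
      (tm_fix hminus') (tm_cyclic hcyc) (tm_cyclic hcyc') hΩ hΩ'
    refine ⟨U, fun i x => ?_⟩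
    rcases fin2 i with rfl | rfl
    · rw [s0_decomp_m (s := s) x, map_smul, map_add, hU 0, hU 1,
        ← s0_decomp_m (s := s') (U x)]
    · rw [s1_decomp_m (s := s) x, map_smul, map_sub, hU 0, hU 1,
        ← s1_decomp_m (s := s') (U x)]
  · -- (3) inequivalence
    intro hplus hminus'
    rintro ⟨U, hU⟩
    have ht' := tm_cuntz hs'
    have hfix' := tm_fix hminus'
    have hcyc'' := tm_cyclic (Ω := Ω') hcyc'
    have hU0 : ∀ x : H, U (tp s 0 x) = tm s' 1 (U x) := by
      intro x
      rw [tp0_apply, map_smul, map_add, hU 0, hU 1, ← tm1_apply]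
    have hxfix : tm s' 1 (U Ω) = U Ω := by
      calc tm s' 1 (U Ω) = U (tp s 0 Ω) := (hU0 Ω).symm
        _ = U Ω := by rw [tp_fix hplus]
    have h1 : star (tm s' 1) (U Ω) = U Ω := by
      conv_lhs => rw [← hxfix]
      simpa using cuntz_apply ht' 1 1 (U Ω)
    have h0 : star (tm s' 0) (U Ω) = 0 := by
      conv_lhs => rw [← hxfix]
      simpa using cuntz_apply ht' 0 1 (U Ω)
    have hzero := vanish_vec ht' hfix' hcyc'' h0 h1
    have hnorm : ‖U Ω‖ = 1 := by rw [LinearIsometryEquiv.norm_map]; exact hΩ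
    rw [hzero, norm_zero] at hnorm
    norm_num at hnorm
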